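/- Grassmannian resolvent equation: let (s,t),(u,v) ∈ [m-d]×[d], π ∈ Gr^{(m-d;m)}_1(A), and suppose ρ̃^{(d;m)}(π;B) is (s,t)-admissible. Then for all σ ∈ ρ̃_n(π;B), σ' ∈ ρ̃_{n'}(π;B), and X ∈ M_{n,n'}(B): (Δ̃^{(d;m)}_{s,t} R̃^{(d;m)}(π;B|v,u))(σ;σ')(X) = − R̃^{(d;m)}(π;B|v,s)(σ) · X · R̃^{(d;m)}(π;B|t,u)(σ'). -/

import Mathlib

open Matrix

/-- `n × n` matrices over `A`. -/
abbrev Mat (A : Type) (n : ℕ) : Type := Matrix (Fin n) (Fin n) A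

/-- `m × m` block matrices with `n × n` blocks over `A`, i.e. `M_m(M_n(A))`. -/
abbrev BMat (A : Type) (m n : ℕ) : Type := Matrix (Fin m) (Fin m) (Mat A n)

section NC

variable {R : Type} [CommRing R] {A : Type} [Ring A]

/-- Membership in the subgroup `H^{(d;m)}_n(A)` of invertible block lower-triangular
matrices `[[X,0],[Y,Z]]` with `X ∈ GL_{m-d}`, `Z ∈ GL_d`. -/
def memH (m d n : ℕ) (hd : d ≤ m) (Γ : BMat A m n) : Prop :=
  IsUnit Γ ∧
  (∀ i j : Fin m, (i : ℕ) < m - d → m - d ≤ (j : ℕ) → Γ i j = 0) ∧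
  IsUnit (Matrix.of fun i j : Fin (m - d) =>
    Γ ⟨(i : ℕ), lt_of_lt_of_le i.isLt (Nat.sub_le m d)⟩
      ⟨(j : ℕ), lt_of_lt_of_le j.isLt (Nat.sub_le m d)⟩) ∧
  IsUnit (Matrix.of fun i j : Fin d =>
    Γ ⟨m - d + (i : ℕ), by have := i.isLt; omega⟩
      ⟨m - d + (j : ℕ), by have := j.isLt; omega⟩)

/-- The relation `X ~ Y` iff `X = Y Γ` for some `Γ ∈ H^{(d;m)}_n(A)`. -/
def grel (m d n : ℕ) (hd : d ≤ m) (X Y : BMat A m n) : Prop :=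
  ∃ Γ : BMat A m n, memH m d n hd Γ ∧ X = Y * Γ

/-- Direct sum of square matrices. -/
def dsumMat {n n' : ℕ} (X : Mat A n) (Y : Mat A n') : Mat A (n + n') :=
  Matrix.reindex finSumFinEquiv finSumFinEquiv (Matrix.fromBlocks X 0 0 Y)

/-- Entrywise block direct sum `X ⊕̃ Y` of elements of `M_m(M_n(A))`, `M_m(M_{n'}(A))`. -/
def dsum {m n n' : ℕ} (X : BMat A m n) (Y : BMat A m n') : BMat A m (n + n') :=
  Matrix.of fun i j => dsumMat (X i j) (Y i j)

/-- Direct sum of square matrices with entries in a module. -/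
def dsumW {W : Type} [AddCommMonoid W] {n n' : ℕ}
    (X : Matrix (Fin n) (Fin n) W) (Y : Matrix (Fin n') (Fin n') W) :
    Matrix (Fin (n + n')) (Fin (n + n')) W :=
  Matrix.reindex finSumFinEquiv finSumFinEquiv (Matrix.fromBlocks X 0 0 Y)

/-- Block upper triangular matrix `[[P, H],[0, Q]]`. -/
def triW {W : Type} [AddCommMonoid W] {n n' : ℕ}
    (P : Matrix (Fin n) (Fin n) W) (H : Matrix (Fin n) (Fin n') W)
    (Q : Matrix (Fin n') (Fin n') W) :
    Matrix (Fin (n + n')) (Fin (n + n')) W :=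
  Matrix.reindex finSumFinEquiv finSumFinEquiv (Matrix.fromBlocks P H 0 Q)

/-- The unipotent upper triangular matrix `[[I, T],[0, I]]` over `R`. -/
def uptri (R : Type) [CommRing R] {p q : ℕ} (T : Matrix (Fin p) (Fin q) R) :
    Matrix (Fin (p + q)) (Fin (p + q)) R :=
  Matrix.reindex finSumFinEquiv finSumFinEquiv (Matrix.fromBlocks 1 T 0 1)

/-- Left multiplication of a representative by `s^{⊕ m}` for a scalar matrix `s` over `R`:
the similarity action on the nc Grassmannian. -/
def simAct [Algebra R A] {m N : ℕ} (s : Matrix (Fin N) (Fin N) R) (X : BMat A m N) :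
    BMat A m N :=
  Matrix.of fun i j => s.map (algebraMap R A) * X i j

/-- Multiplication of a matrix over an `R`-module `W` by a matrix over `R` on the left. -/
def rmulL {W : Type} [AddCommMonoid W] [Module R W] {p q r : ℕ}
    (s : Matrix (Fin p) (Fin q) R) (X : Matrix (Fin q) (Fin r) W) :
    Matrix (Fin p) (Fin r) W :=
  Matrix.of fun i j => ∑ k, s i k • X k j

/-- Multiplication of a matrix over an `R`-module `W` by a matrix over `R` on the right. -/
def rmulR {W : Type} [AddCommMonoid W] [Module R W] {p q r : ℕ}
    (X : Matrix (Fin p) (Fin q) W) (s : Matrix (Fin q) (Fin r) R) :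
    Matrix (Fin p) (Fin r) W :=
  Matrix.of fun i j => ∑ k, s k j • X i k

/-- Vertical concatenation of matrices. -/
def vcat {α : Type} {p p' q : ℕ} (X : Matrix (Fin p) (Fin q) α)
    (Y : Matrix (Fin p') (Fin q) α) : Matrix (Fin (p + p')) (Fin q) α :=
  Matrix.of fun i j =>
    if h : (i : ℕ) < p then X ⟨(i : ℕ), h⟩ j
    else Y ⟨(i : ℕ) - p, by have := i.isLt; omega⟩ j

/-- The affine embedding `X ↦ [[0, I],[I, X]]` in the case `(d;m) = (1;2)`. -/
def affEmb {n : ℕ} (X : Mat A n) : BMat A 2 n := !![0, 1; 1, X]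

/-- The matrix `[[0, X],[0, 0]] ∈ M_{n+n'}(A)` with `X ∈ M_{n,n'}(A)` in the upper right
corner. -/
def cornerMat {n n' : ℕ} (X : Matrix (Fin n) (Fin n') A) : Mat A (n + n') :=
  Matrix.reindex finSumFinEquiv finSumFinEquiv (Matrix.fromBlocks 0 X 0 0)

/-- The representative `(P;Q)_{u,v}(X)` of the element `(σ;σ')_{u,v}(X)`:
`P ⊕̃ Q + Σ_{j=1}^d [[0, X Q_{v, m-d+j}],[0,0]] ⊗ e^{(m)}_{d+u, m-d+j}`. -/
def ins {m d n n' : ℕ} (hd : d ≤ m) (u : Fin (m - d)) (v : Fin d)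
    (P : BMat A m n) (Q : BMat A m n') (X : Matrix (Fin n) (Fin n') A) :
    BMat A m (n + n') :=
  dsum P Q + Matrix.of fun (i j : Fin m) =>
    if (i : ℕ) = d + (u : ℕ) ∧ m - d ≤ (j : ℕ) then
      cornerMat (X * Q ⟨(v : ℕ), lt_of_lt_of_le v.isLt hd⟩ j)
    else 0

/-- The matrix unit `e^{(md,d)}_{u,v} ⊗ X`. -/
def eMat {md d : ℕ} {n : ℕ} (u : Fin md) (v : Fin d) (X : Mat A n) :
    Matrix (Fin md) (Fin d) (Mat A n) :=
  Matrix.of fun i j => if i = u ∧ j = v then X else 0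

/-- The block matrix `[[I_d ⊗ I_n, 0],[-Y, I_{m-d} ⊗ I_n]]` used to define `σ(Y)`. -/
def shiftMat {m d n : ℕ} (hd : d ≤ m) (Y : Matrix (Fin (m - d)) (Fin d) (Mat A n)) :
    BMat A m n :=
  Matrix.of fun i j =>
    (if i = j then (1 : Mat A n) else 0) +
    (if h : d ≤ (i : ℕ) ∧ (j : ℕ) < d then
      -Y ⟨(i : ℕ) - d, by have := i.isLt; omega⟩ ⟨(j : ℕ), h.2⟩
    else 0)

/-- A family `C` of sets of representatives is an nc set over `Gr^{(d;m)}(A)`: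
it consists of invertible matrices, is saturated under the relation `~`
(i.e. it is a set of equivalence classes), and is closed under direct sums. -/
def IsNCSetCarrier {m d : ℕ} (hd : d ≤ m) (C : ∀ n, Set (BMat A m n)) : Prop :=
  (∀ n, ∀ a ∈ C n, IsUnit a) ∧
  (∀ n, ∀ a b : BMat A m n, grel m d n hd a b → (a ∈ C n ↔ b ∈ C n)) ∧
  (∀ n n', ∀ a ∈ C n, ∀ b ∈ C n', dsum a b ∈ C (n + n'))

/-- `f` is an nc function on the nc set (with carrier) `C` over `Gr^{(d;m)}(A)`:
it descends to equivalence classes, preserves direct sums, and is similarity preserving. -/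
def IsNCFun (R : Type) [CommRing R] [Algebra R A] {W : Type} [AddCommMonoid W] [Module R W]
    {m d : ℕ} (hd : d ≤ m) (C : ∀ n, Set (BMat A m n))
    (f : ∀ n, BMat A m n → Matrix (Fin n) (Fin n) W) : Prop :=
  (∀ n, ∀ a ∈ C n, ∀ b ∈ C n, grel m d n hd a b → f n a = f n b) ∧
  (∀ n n', ∀ a ∈ C n, ∀ b ∈ C n', f (n + n') (dsum a b) = dsumW (f n a) (f n' b)) ∧
  (∀ n (s : (Matrix (Fin n) (Fin n) R)ˣ), ∀ a ∈ C n,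
    simAct (s : Matrix (Fin n) (Fin n) R) a ∈ C n →
    f n (simAct (s : Matrix (Fin n) (Fin n) R) a) =
      rmulR (rmulL (s : Matrix (Fin n) (Fin n) R) (f n a))
        ((s⁻¹ : (Matrix (Fin n) (Fin n) R)ˣ) : Matrix (Fin n) (Fin n) R))

/-- `(u,v)`-admissibility of an nc set. -/
def Admissible (R : Type) [CommRing R] [Algebra R A] {m d : ℕ} (hd : d ≤ m)
    (C : ∀ n, Set (BMat A m n)) (u : Fin (m - d)) (v : Fin d) : Prop :=
  ∀ n n' (a : BMat A m n) (b : BMat A m n') (X : Matrix (Fin n) (Fin n') A),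
    a ∈ C n → b ∈ C n' →
    ∃ r : Rˣ, ins hd u v a b ((r : R) • X) ∈ C (n + n')

/-- The similarity-invariant envelope of an nc set. -/
def envC (R : Type) [CommRing R] [Algebra R A] {m d : ℕ} (hd : d ≤ m)
    (C : ∀ n, Set (BMat A m n)) : ∀ n, Set (BMat A m n) :=
  fun n => {x | ∃ (s : (Matrix (Fin n) (Fin n) R)ˣ) (a : BMat A m n),
    a ∈ C n ∧ grel m d n hd x (simAct (s : Matrix (Fin n) (Fin n) R) a)}

end NC

section Res

variable {R : Type} [CommRing R] {A : Type} [Ring A] [Algebra R A]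

/-- Entrywise inclusion `M_m(M_n(B)) → M_m(M_n(A))` for a subalgebra `B ⊆ A`. -/
def bmap (D : Subalgebra R A) {m n : ℕ} (b : BMat (↥D) m n) : BMat A m n :=
  Matrix.of fun i j => (b i j).map (fun x => (x : A))

/-- Entrywise inclusion for rectangular matrices over a subalgebra. -/
def rcmap (D : Subalgebra R A) {n n' : ℕ} (X : Matrix (Fin n) (Fin n') ↥D) :
    Matrix (Fin n) (Fin n') A :=
  X.map (fun x => (x : A))

/-- `X` is invertible in `M_m(M_n(B))` for the subalgebra `B = D ⊆ A`. -/
def invIn (D : Subalgebra R A) {m n : ℕ} (X : BMat A m n) : Prop :=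
  (∀ i j k l, X i j k l ∈ D) ∧
  ∃ Y : BMat A m n, (∀ i j k l, Y i j k l ∈ D) ∧ X * Y = 1 ∧ Y * X = 1

/-- The amplification `a^{⊕̃ n}` of an element `a ∈ M_m(A) = M_m(M_1(A))`. -/
def ampl {m : ℕ} (a : BMat A m 1) (n : ℕ) : BMat A m n :=
  Matrix.of fun i j => Matrix.diagonal (fun _ => a i j 0 0)

/-- The matrix `r^{(d;m)}(P;Q)`: first `m-d` block columns are the last `m-d` block
columns of `P`, last `d` block columns are the last `d` block columns of `Q`. -/
def rmat {m d n : ℕ} (hd : d ≤ m) (P Q : BMat A m n) : BMat A m n :=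
  Matrix.of fun i j =>
    if h : (j : ℕ) < m - d then P i ⟨d + (j : ℕ), by omega⟩ else Q i j

/-- The value `[B_{v,m-d+1},…,B_{v,m}] ⋅ ζ_u` of the `(d;m)`-Grassmannian resolvent,
where `ζ_u` is the `u`-th bottom block column of the inverse `Rinv` of an `r`-matrix. -/
def resVal {m d n : ℕ} (hd : d ≤ m) (v : Fin d) (u : Fin (m - d))
    (Bm Rinv : BMat A m n) : Mat A n :=
  ∑ j : Fin d,
    Bm ⟨(v : ℕ), lt_of_lt_of_le v.isLt hd⟩ ⟨m - d + (j : ℕ), by have := j.isLt; omega⟩ *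
    Rinv ⟨m - d + (j : ℕ), by have := j.isLt; omega⟩ ⟨d + (u : ℕ), by have := u.isLt; omega⟩

/-- Membership in the `(d;m)`-Grassmannian `B`-resolvent set of `π` (represented by `p`):
`b` represents an element of `Gr^{(d;m)}_n(B)` such that `π^{⊕n}` and `b` are
transversal in `A`. -/
def ResMem {m d : ℕ} (hd : d ≤ m) (p : BMat A m 1) (D : Subalgebra R A) {n : ℕ}
    (b : BMat (↥D) m n) : Prop :=
  IsUnit b ∧ IsUnit (rmat hd (ampl p n) (bmap D b))

end Res
section Lemmas
variable {A : Type} [Ring A]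

lemma reindex_mul {p q : ℕ} (e : Fin p ⊕ Fin q ≃ Fin (p+q)) (M N : Matrix (Fin p ⊕ Fin q) (Fin p ⊕ Fin q) A) :
    (Matrix.reindex e e M) * (Matrix.reindex e e N) = Matrix.reindex e e (M * N) := by
  simp [Matrix.reindex_apply, Matrix.submatrix_mul_equiv]

lemma dsumMat_mul {n n' : ℕ} (X X' : Mat A n) (Y Y' : Mat A n') :
    dsumMat X Y * dsumMat X' Y' = dsumMat (X * X') (Y * Y') := by
  unfold dsumMat
  rw [reindex_mul, Matrix.fromBlocks_multiply]
  simp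

lemma dsumMat_mul_corner {n n' : ℕ} (X : Mat A n) (Y : Mat A n') (Z : Matrix (Fin n) (Fin n') A) :
    dsumMat X Y * cornerMat Z = cornerMat (X * Z) := by
  unfold dsumMat cornerMat
  rw [reindex_mul, Matrix.fromBlocks_multiply]
  simp

lemma corner_mul_dsumMat {n n' : ℕ} (X : Mat A n) (Y : Mat A n') (Z : Matrix (Fin n) (Fin n') A) :
    cornerMat Z * dsumMat X Y = cornerMat (Z * Y) := by
  unfold dsumMat cornerMat
  rw [reindex_mul, Matrix.fromBlocks_multiply]
  simp

lemma corner_mul_corner {n n' : ℕ} (Z Z' : Matrix (Fin n) (Fin n') A) :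
    cornerMat Z * cornerMat Z' = 0 := by
  unfold cornerMat
  rw [reindex_mul, Matrix.fromBlocks_multiply]
  simp

lemma dsumMat_one {n n' : ℕ} : dsumMat (1 : Mat A n) (1 : Mat A n') = 1 := by
  unfold dsumMat
  rw [Matrix.fromBlocks_one]
  simp [Matrix.reindex_apply, Matrix.submatrix_one_equiv]

lemma dsumMat_zero {n n' : ℕ} : dsumMat (0 : Mat A n) (0 : Mat A n') = 0 := by
  unfold dsumMat; simp

lemma cornerMat_zero {n n' : ℕ} : cornerMat (0 : Matrix (Fin n) (Fin n') A) = 0 := by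
  unfold cornerMat; simp

lemma reindex_addhom {p q : ℕ} (e : Fin p ⊕ Fin q ≃ Fin (p+q)) (M N : Matrix (Fin p ⊕ Fin q) (Fin p ⊕ Fin q) A) :
    Matrix.reindex e e (M + N) = Matrix.reindex e e M + Matrix.reindex e e N := by
  ext i j; simp [Matrix.reindex_apply]

lemma dsumMat_add {n n' : ℕ} (X X' : Mat A n) (Y Y' : Mat A n') :
    dsumMat (X + X') (Y + Y') = dsumMat X Y + dsumMat X' Y' := by
  unfold dsumMat
  rw [← reindex_addhom]
  congr 1
  ext (i|i) (j|j) <;> simp [Matrix.fromBlocks]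

lemma cornerMat_add {n n' : ℕ} (Z Z' : Matrix (Fin n) (Fin n') A) :
    cornerMat (Z + Z') = cornerMat Z + cornerMat Z' := by
  unfold cornerMat
  rw [← reindex_addhom]
  congr 1
  ext (i|i) (j|j) <;> simp [Matrix.fromBlocks]

lemma cornerMat_neg {n n' : ℕ} (Z : Matrix (Fin n) (Fin n') A) :
    cornerMat (-Z) = -cornerMat Z := by
  have h : cornerMat Z + cornerMat (-Z) = 0 := by
    rw [← cornerMat_add (A := A) Z (-Z)]
    simp [cornerMat_zero]
  exact (neg_eq_of_add_eq_zero_right h).symm ▸ (eq_neg_of_add_eq_zero_right h)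


lemma triW_eq {n n' : ℕ} (P : Mat A n) (H : Matrix (Fin n) (Fin n') A) (Q : Mat A n') :
    triW P H Q = dsumMat P Q + cornerMat H := by
  unfold triW dsumMat cornerMat
  rw [← reindex_addhom]
  congr 1
  ext (i|i) (j|j) <;> simp [Matrix.fromBlocks]

lemma sum_dsumMat {ι : Type} (sset : Finset ι) {n n' : ℕ} (f : ι → Mat A n) (g : ι → Mat A n') :
    ∑ k ∈ sset, dsumMat (f k) (g k) = dsumMat (∑ k ∈ sset, f k) (∑ k ∈ sset, g k) := by
  classical
  induction sset using Finset.induction with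
  | empty => simp [dsumMat_zero]
  | insert _ _ h ih => simp [Finset.sum_insert h, ih, dsumMat_add]

lemma sum_cornerMat {ι : Type} (sset : Finset ι) {n n' : ℕ} (f : ι → Matrix (Fin n) (Fin n') A) :
    ∑ k ∈ sset, cornerMat (f k) = cornerMat (∑ k ∈ sset, f k) := by
  classical
  induction sset using Finset.induction with
  | empty => simp [cornerMat_zero]
  | insert _ _ h ih => simp [Finset.sum_insert h, ih, cornerMat_add]

end Lemmas
section Lemmas2
variable {A : Type} [Ring A]

/-- Block matrix all of whose entries are corner matrices. -/
def cmap {m n n' : ℕ} (Z : Matrix (Fin m) (Fin m) (Matrix (Fin n) (Fin n') A)) :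
    BMat A m (n + n') :=
  Matrix.of fun i j => cornerMat (Z i j)

lemma dsum_mul {m n n' : ℕ} (P P' : BMat A m n) (Q Q' : BMat A m n') :
    dsum P Q * dsum P' Q' = dsum (P * P') (Q * Q') := by
  ext i j
  simp only [Matrix.mul_apply, dsum, Matrix.of_apply, dsumMat_mul]
  rw [sum_dsumMat]

lemma dsum_one {m n n' : ℕ} : dsum (1 : BMat A m n) (1 : BMat A m n') = 1 := by
  ext i j
  simp only [dsum, Matrix.of_apply, Matrix.one_apply]
  by_cases h : i = j <;> simp [h, dsumMat_one, dsumMat_zero]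

lemma dsum_mul_cmap {m n n' : ℕ} (P : BMat A m n) (Q : BMat A m n')
    (Z : Matrix (Fin m) (Fin m) (Matrix (Fin n) (Fin n') A)) :
    dsum P Q * cmap Z = cmap (Matrix.of fun i j => ∑ k, P i k * Z k j) := by
  ext i j
  simp only [Matrix.mul_apply, dsum, cmap, Matrix.of_apply, dsumMat_mul_corner]
  rw [sum_cornerMat]

lemma cmap_mul_dsum {m n n' : ℕ} (P : BMat A m n) (Q : BMat A m n')
    (Z : Matrix (Fin m) (Fin m) (Matrix (Fin n) (Fin n') A)) :
    cmap Z * dsum P Q = cmap (Matrix.of fun i j => ∑ k, Z i k * Q k j) := by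
  ext i j
  simp only [Matrix.mul_apply, dsum, cmap, Matrix.of_apply, corner_mul_dsumMat]
  rw [sum_cornerMat]

lemma cmap_mul_cmap {m n n' : ℕ} (Z Z' : Matrix (Fin m) (Fin m) (Matrix (Fin n) (Fin n') A)) :
    cmap Z * cmap Z' = 0 := by
  ext i j
  simp [Matrix.mul_apply, cmap, corner_mul_corner]

end Lemmas2
section Lemmas3
variable {R : Type} [CommRing R] {A : Type} [Ring A] [Algebra R A] (D : Subalgebra R A)

lemma map_dsumMat {n n' : ℕ} (X : Mat ↥D n) (Y : Mat ↥D n') :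
    (dsumMat X Y).map (fun x => (x : A)) =
      dsumMat (X.map (fun x => (x : A))) (Y.map (fun x => (x : A))) := by
  unfold dsumMat
  simp only [Matrix.reindex_apply, ← Matrix.submatrix_map, Matrix.fromBlocks_map]
  congr 1 <;> ext i j <;> simp

lemma map_cornerMat {n n' : ℕ} (Z : Matrix (Fin n) (Fin n') ↥D) :
    (cornerMat Z).map (fun x => (x : A)) = cornerMat (Z.map (fun x => (x : A))) := by
  unfold cornerMat
  simp only [Matrix.reindex_apply, ← Matrix.submatrix_map, Matrix.fromBlocks_map]
  congr 1 <;> ext i j <;> simp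

lemma dsumMat_diag_const {n n' : ℕ} (c : A) :
    dsumMat (Matrix.diagonal fun _ : Fin n => c) (Matrix.diagonal fun _ : Fin n' => c) =
      Matrix.diagonal fun _ : Fin (n + n') => c := by
  unfold dsumMat
  rw [Matrix.fromBlocks_diagonal]
  rw [Matrix.reindex_apply, Matrix.submatrix_diagonal_equiv]
  have he : (((fun _ : Fin n => c) ⊕ᵥ fun _ : Fin n' => c) ∘ ⇑finSumFinEquiv.symm) =
      fun _ : Fin (n + n') => c := by
    funext x
    cases h : finSumFinEquiv.symm x <;> simp [Function.comp, h]
  rw [he]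

lemma ampl_dsum {m : ℕ} (p : BMat A m 1) (n n' : ℕ) :
    ampl p (n + n') = dsum (ampl p n) (ampl p n') := by
  refine Matrix.ext fun i j => ?_
  simp only [ampl, dsum, Matrix.of_apply]
  exact (dsumMat_diag_const (n := n) (n' := n') (p i j 0 0)).symm

end Lemmas3
section Lemmas4
variable {M : Type} [AddCommMonoid M]

lemma sum_ite_coe {m : ℕ} (c : ℕ) (hc : c < m) (f : Fin m → M) :
    (∑ k : Fin m, if (k : ℕ) = c then f k else 0) = f ⟨c, hc⟩ := by
  have h : ∀ k : Fin m, ((k : ℕ) = c) ↔ (k = ⟨c, hc⟩) := fun k => by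
    constructor <;> intro h <;> [exact Fin.ext h; exact congrArg Fin.val h]
  simp only [h]
  simp

lemma sum_tail {m d : ℕ} (hd : d ≤ m) (g : Fin m → M) :
    (∑ l : Fin m, if m - d ≤ (l : ℕ) then g l else 0) =
      ∑ j : Fin d, g ⟨m - d + (j : ℕ), by omega⟩ := by
  classical
  have hm : m - d + d = m := by omega
  have := Fintype.sum_equiv ((finSumFinEquiv (m := m - d) (n := d)).trans (finCongr hm))
    (fun x => if m - d ≤ (((finSumFinEquiv.trans (finCongr hm)) x : Fin m) : ℕ) then
        g ((finSumFinEquiv.trans (finCongr hm)) x) else 0)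
    (fun l : Fin m => if m - d ≤ (l : ℕ) then g l else 0) (fun x => rfl)
  rw [← this, Fintype.sum_sum_type]
  have h1 : ∀ i : Fin (m - d),
      (((finSumFinEquiv.trans (finCongr hm)) (Sum.inl i) : Fin m) : ℕ) = (i : ℕ) := by
    intro i; simp
  have h2 : ∀ j : Fin d,
      (((finSumFinEquiv.trans (finCongr hm)) (Sum.inr j) : Fin m) : ℕ) = m - d + (j : ℕ) := by
    intro j; simp
  have hz : (∑ i : Fin (m - d), if m - d ≤ (((finSumFinEquiv.trans (finCongr hm))
      (Sum.inl i) : Fin m) : ℕ) then g ((finSumFinEquiv.trans (finCongr hm)) (Sum.inl i))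
      else 0) = 0 := by
    refine Finset.sum_eq_zero fun i _ => ?_
    rw [if_neg]
    rw [h1 i]
    have := i.isLt; omega
  rw [hz, zero_add]
  refine Finset.sum_congr rfl fun j _ => ?_
  have hcond : m - d ≤ (((finSumFinEquiv.trans (finCongr hm)) (Sum.inr j) : Fin m) : ℕ) := by
    rw [h2 j]; omega
  rw [if_pos hcond]
  exact congrArg g (Fin.ext (h2 j))

end Lemmas4

set_option maxHeartbeats 1000000 in
/-- the Grassmannian resolvent equation
`(Δ̃^{(d;m)}_{s,t} R̃(π;B|v,u))(σ;σ')(X) = − R̃(π;B|v,s)(σ) ⋅ X ⋅ R̃(π;B|t,u)(σ')`,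
expressed through the defining property of `Δ̃`. -/
theorem resolvent_equation {R : Type} [CommRing R] {A : Type} [Ring A] [Algebra R A]
    (D : Subalgebra R A) (m d : ℕ) (hd1 : 1 ≤ d) (hd : d ≤ m)
    (p : BMat A m 1) (hp : IsUnit p)
    (s : Fin (m - d)) (t : Fin d) (u : Fin (m - d)) (v : Fin d)
    (hadm : ∀ (n n' : ℕ) (b : BMat (↥D) m n) (b' : BMat (↥D) m n')
      (X : Matrix (Fin n) (Fin n') ↥D), ResMem hd p D b → ResMem hd p D b' →
      ∃ r : Rˣ, ResMem hd p D (ins hd s t b b' ((r : R) • X))) :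
    ∀ (n n' : ℕ) (b : BMat (↥D) m n) (b' : BMat (↥D) m n')
      (X : Matrix (Fin n) (Fin n') ↥D),
      ResMem hd p D b → ResMem hd p D b' →
      ∀ r : Rˣ, ∀ (Rinv0 : BMat A m n) (Rinv1 : BMat A m n') (Rinv2 : BMat A m (n + n')),
        rmat hd (ampl p n) (bmap D b) * Rinv0 = 1 →
        Rinv0 * rmat hd (ampl p n) (bmap D b) = 1 →
        rmat hd (ampl p n') (bmap D b') * Rinv1 = 1 →
        Rinv1 * rmat hd (ampl p n') (bmap D b') = 1 →
        rmat hd (ampl p (n + n')) (bmap D (ins hd s t b b' ((r : R) • X))) * Rinv2 = 1 →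
        Rinv2 * rmat hd (ampl p (n + n')) (bmap D (ins hd s t b b' ((r : R) • X))) = 1 →
        resVal hd v u (bmap D (ins hd s t b b' ((r : R) • X))) Rinv2 =
          triW (resVal hd v u (bmap D b) Rinv0)
            ((r : R) • (-(resVal hd v s (bmap D b) Rinv0) * rcmap D X *
              resVal hd t u (bmap D b') Rinv1))
            (resVal hd v u (bmap D b') Rinv1) := by
  intro n n' b b' X hb hb' r Rinv0 Rinv1 Rinv2 h00 h01 h10 h11 h20 h21
  classical
  clear hadm hp hb hb'
  set Y : Matrix (Fin n) (Fin n') ↥D := (r : R) • X with hY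
  have hvm : (v : ℕ) < m := lt_of_lt_of_le v.isLt hd
  have htm : (t : ℕ) < m := lt_of_lt_of_le t.isLt hd
  have hds : d + (s : ℕ) < m := by have := s.isLt; omega
  have hum : d + (u : ℕ) < m := by have := u.isLt; omega
  set ZZ : Matrix (Fin m) (Fin m) (Matrix (Fin n) (Fin n') A) :=
    Matrix.of (fun i j => if (i : ℕ) = d + (s : ℕ) ∧ m - d ≤ (j : ℕ) then
      rcmap D Y * bmap D b' ⟨(t : ℕ), htm⟩ j else 0) with hZZ
  -- coercion ring hom facts
  have hmap_add : ∀ {q : ℕ} (P Q : Mat ↥D q),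
      (P + Q).map (fun x => (x : A)) =
        P.map (fun x => (x : A)) + Q.map (fun x => (x : A)) := by
    intro q P Q; ext k l; simp
  have hmap_mul : ∀ {q q' q'' : ℕ} (P : Matrix (Fin q) (Fin q') ↥D)
      (Q : Matrix (Fin q') (Fin q'') ↥D),
      (P * Q).map (fun x => (x : A)) =
        P.map (fun x => (x : A)) * Q.map (fun x => (x : A)) := by
    intro q q' q'' P Q; ext k l; simp [Matrix.mul_apply]
  -- Step 1 : decomposition of `bmap D (ins …)`
  have hins : bmap D (ins hd s t b b' Y) = dsum (bmap D b) (bmap D b') + cmap ZZ := by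
    refine Matrix.ext fun i j => ?_
    simp only [bmap, ins, Matrix.of_apply, Matrix.add_apply, dsum, cmap, hZZ]
    rw [hmap_add]
    congr 1
    · exact map_dsumMat D _ _
    · split_ifs with h
      · rw [map_cornerMat, hmap_mul]
        rfl
      · simp [cornerMat_zero]
  -- Step 2 : decomposition of the big `rmat`
  have hrmat : rmat hd (ampl p (n + n')) (bmap D (ins hd s t b b' Y)) =
      dsum (rmat hd (ampl p n) (bmap D b)) (rmat hd (ampl p n') (bmap D b')) + cmap ZZ := by
    rw [hins, ampl_dsum]
    refine Matrix.ext fun i j => ?_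
    by_cases h : (j : ℕ) < m - d
    · have hz : ZZ i j = 0 := by
        rw [hZZ]; simp only [Matrix.of_apply]; rw [if_neg]; rintro ⟨-, h2⟩; omega
      simp only [rmat, dsum, cmap, Matrix.of_apply, Matrix.add_apply, dif_pos h, hz,
        cornerMat_zero, add_zero]
    · simp only [rmat, dsum, cmap, Matrix.of_apply, Matrix.add_apply, dif_neg h]
  -- Step 3 : identify `Rinv2`
  set M0 := rmat hd (ampl p n) (bmap D b) with hM0
  set M1 := rmat hd (ampl p n') (bmap D b') with hM1
  set N : BMat A m (n + n') :=
    dsum Rinv0 Rinv1 - dsum Rinv0 Rinv1 * cmap ZZ * dsum Rinv0 Rinv1 with hNdef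
  have e1 : dsum M0 M1 * dsum Rinv0 Rinv1 = 1 := by
    rw [dsum_mul, h00, h10, dsum_one]
  have hMN : (dsum M0 M1 + cmap ZZ) * N = 1 := by
    have e2 : dsum M0 M1 * (dsum Rinv0 Rinv1 * cmap ZZ * dsum Rinv0 Rinv1) =
        cmap ZZ * dsum Rinv0 Rinv1 := by
      rw [← mul_assoc, ← mul_assoc, e1, one_mul]
    have e3 : cmap ZZ * (dsum Rinv0 Rinv1 * cmap ZZ * dsum Rinv0 Rinv1) = 0 := by
      rw [dsum_mul_cmap, ← mul_assoc, cmap_mul_cmap, zero_mul]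
    rw [hNdef, add_mul, mul_sub, mul_sub, e1, e2, e3, sub_zero, cmap_mul_dsum]
    abel
  have hR2 : Rinv2 = N := by
    calc Rinv2 = Rinv2 * ((dsum M0 M1 + cmap ZZ) * N) := by rw [hMN, mul_one]
      _ = (Rinv2 * (dsum M0 M1 + cmap ZZ)) * N := by rw [mul_assoc]
      _ = N := by rw [← hrmat, h21, one_mul]
  -- Step 4 : the corner part of `N`
  set Z1 : Matrix (Fin m) (Fin m) (Matrix (Fin n) (Fin n') A) :=
    Matrix.of (fun i j => ∑ k, Rinv0 i k * ZZ k j) with hZ1def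
  set W : Matrix (Fin m) (Fin m) (Matrix (Fin n) (Fin n') A) :=
    Matrix.of (fun i j => ∑ k, Z1 i k * Rinv1 k j) with hWdef
  have hN : Rinv2 = dsum Rinv0 Rinv1 - cmap W := by
    rw [hR2, hNdef, dsum_mul_cmap, cmap_mul_dsum, ← hZ1def, ← hWdef]
  -- Step 5 : compute the resolvent value
  have hZ1 : ∀ (a k : Fin m), Z1 a k =
      if m - d ≤ (k : ℕ) then
        Rinv0 a ⟨d + (s : ℕ), hds⟩ * (rcmap D Y * bmap D b' ⟨(t : ℕ), htm⟩ k) else 0 := by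
    intro a k
    rw [hZ1def]
    simp only [Matrix.of_apply, hZZ]
    by_cases hc : m - d ≤ (k : ℕ)
    · rw [if_pos hc]
      have hcongr : ∀ l : Fin m,
          (Rinv0 a l * if (l : ℕ) = d + (s : ℕ) ∧ m - d ≤ (k : ℕ) then
            rcmap D Y * bmap D b' ⟨(t : ℕ), htm⟩ k else 0) =
          (if (l : ℕ) = d + (s : ℕ) then
            Rinv0 a l * (rcmap D Y * bmap D b' ⟨(t : ℕ), htm⟩ k) else 0) := by
        intro l; by_cases hl : (l : ℕ) = d + (s : ℕ) <;> simp [hl, hc]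
      rw [Finset.sum_congr rfl fun l _ => hcongr l]
      exact sum_ite_coe (d + (s : ℕ)) hds _
    · simp [hc]
  have hW : ∀ j : Fin d, W ⟨m - d + (j : ℕ), by omega⟩ ⟨d + (u : ℕ), hum⟩ =
      Rinv0 ⟨m - d + (j : ℕ), by omega⟩ ⟨d + (s : ℕ), hds⟩ *
        (rcmap D Y * resVal hd t u (bmap D b') Rinv1) := by
    intro j
    rw [hWdef]
    simp only [Matrix.of_apply, hZ1]
    have hsum : (∑ x : Fin m, (if m - d ≤ (x : ℕ) then
          Rinv0 ⟨m - d + (j : ℕ), by omega⟩ ⟨d + (s : ℕ), hds⟩ *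
            (rcmap D Y * bmap D b' ⟨(t : ℕ), htm⟩ x) else 0) * Rinv1 x ⟨d + (u : ℕ), hum⟩) =
        ∑ x : Fin m, if m - d ≤ (x : ℕ) then
          Rinv0 ⟨m - d + (j : ℕ), by omega⟩ ⟨d + (s : ℕ), hds⟩ *
            (rcmap D Y * bmap D b' ⟨(t : ℕ), htm⟩ x) * Rinv1 x ⟨d + (u : ℕ), hum⟩ else 0 :=
      Finset.sum_congr rfl fun x _ => by by_cases hx : m - d ≤ (x : ℕ) <;> simp [hx]
    rw [hsum, sum_tail hd]
    simp only [resVal]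
    rw [Matrix.mul_sum, Matrix.mul_sum]
    exact Finset.sum_congr rfl fun j' _ => by simp only [Matrix.mul_assoc]
  have hZv : ∀ j : Fin d, ZZ ⟨(v : ℕ), hvm⟩ ⟨m - d + (j : ℕ), by omega⟩ = 0 := by
    intro j
    rw [hZZ]; simp only [Matrix.of_apply]; rw [if_neg]
    rintro ⟨h1, -⟩
    have := v.isLt; omega
  rw [hins, hN]
  simp only [resVal, Matrix.add_apply, Matrix.sub_apply, dsum, cmap, Matrix.of_apply]
  have key : ∀ j : Fin d,
      (dsumMat (bmap D b ⟨(v : ℕ), hvm⟩ ⟨m - d + (j : ℕ), by omega⟩)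
          (bmap D b' ⟨(v : ℕ), hvm⟩ ⟨m - d + (j : ℕ), by omega⟩) +
        cornerMat (ZZ ⟨(v : ℕ), hvm⟩ ⟨m - d + (j : ℕ), by omega⟩)) *
      (dsumMat (Rinv0 ⟨m - d + (j : ℕ), by omega⟩ ⟨d + (u : ℕ), hum⟩)
          (Rinv1 ⟨m - d + (j : ℕ), by omega⟩ ⟨d + (u : ℕ), hum⟩) -
        cornerMat (W ⟨m - d + (j : ℕ), by omega⟩ ⟨d + (u : ℕ), hum⟩)) =
      dsumMat (bmap D b ⟨(v : ℕ), hvm⟩ ⟨m - d + (j : ℕ), by omega⟩ *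
          Rinv0 ⟨m - d + (j : ℕ), by omega⟩ ⟨d + (u : ℕ), hum⟩)
        (bmap D b' ⟨(v : ℕ), hvm⟩ ⟨m - d + (j : ℕ), by omega⟩ *
          Rinv1 ⟨m - d + (j : ℕ), by omega⟩ ⟨d + (u : ℕ), hum⟩) -
      cornerMat (bmap D b ⟨(v : ℕ), hvm⟩ ⟨m - d + (j : ℕ), by omega⟩ *
          (Rinv0 ⟨m - d + (j : ℕ), by omega⟩ ⟨d + (s : ℕ), hds⟩ *
            (rcmap D Y * resVal hd t u (bmap D b') Rinv1))) := by
    intro j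
    rw [hZv j, cornerMat_zero, add_zero, mul_sub, dsumMat_mul, dsumMat_mul_corner, hW j]
  rw [Finset.sum_congr rfl fun j _ => key j]
  rw [Finset.sum_sub_distrib, sum_dsumMat, sum_cornerMat, triW_eq, sub_eq_add_neg,
    ← cornerMat_neg]
  congr 1
  have hrc : rcmap D Y = (r : R) • rcmap D X := by
    ext i j; simp [hY, rcmap, Matrix.map_apply]
  simp only [← Matrix.mul_assoc]
  rw [← Matrix.sum_mul, ← Matrix.sum_mul]
  rw [hrc]
  congr 1
  rw [Matrix.mul_smul, Matrix.smul_mul, ← smul_neg]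
  congr 1
  simp only [resVal, Matrix.neg_mul]
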